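/- arXiv:2005.09570 — 3 statements merged into one kernel-verified Lean document; each statement's English description precedes it below -/
import Mathlib

section
/- Let φ, ψ be two structural sets and f a C² function from ℝ³ to ℝ_{0,3}. Define ω(f) = Σᵢ φⁱ f ψⁱ. Then φ∂[ω(f)]ψ∂ = ω(φ∂ f ψ∂), where the two-sided operator is φ∂ f ψ∂ = Σ_{i,j} φⁱ (∂²f/∂xᵢ∂xⱼ) ψʲ. -/
noncomputable section

abbrev V3 : Type := Fin 3 → ℝ

/-- The negative-definite quadratic form on `ℝ³`, so that `CliffordAlgebra Q3 = ℝ_{0,3}`. -/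
def Q3 : QuadraticForm ℝ V3 := -(QuadraticMap.weightedSumSquares ℝ (fun _ : Fin 3 => (1:ℝ)))

/-- The real Clifford algebra `ℝ_{0,3}`. -/
abbrev Cl3 : Type := CliffordAlgebra Q3

namespace Cl3

def bCl : Module.Basis (Module.Free.ChooseBasisIndex ℝ Cl3) ℝ Cl3 := Module.Free.chooseBasis ℝ Cl3

def toLp : Cl3 →ₗ[ℝ] lp (fun _ : Module.Free.ChooseBasisIndex ℝ Cl3 => ℝ) ⊤ where
  toFun x := ⟨fun i => bCl.repr x i, by
    apply memℓp_infty
    have h1 : (Set.range ((bCl.repr x) : _ → ℝ)).Finite := by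
      apply Set.Finite.subset (((bCl.repr x).frange : Finset ℝ).finite_toSet.insert 0)
      rintro y ⟨i, rfl⟩
      by_cases h : (bCl.repr x) i = 0
      · simp [h]
      · exact Set.mem_insert_of_mem _ (by
          simp only [Finset.mem_coe, Finsupp.mem_frange]
          exact ⟨h, i, rfl⟩)
    have h2 : (Set.range fun i => ‖(bCl.repr x) i‖).Finite := by
      have := h1.image norm
      apply this.subset
      rintro y ⟨i, rfl⟩
      exact ⟨(bCl.repr x) i, ⟨i, rfl⟩, rfl⟩
    exact h2.bddAbove⟩
  map_add' x y := by ext i; simp; rfl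
  map_smul' c x := by ext i; simp

lemma toLp_injective : Function.Injective toLp := by
  intro x y h
  apply bCl.repr.injective
  ext i
  exact congrFun (congrArg Subtype.val h) i

instance : NormedAddCommGroup Cl3 := NormedAddCommGroup.induced Cl3 _ toLp toLp_injective
instance : NormedSpace ℝ Cl3 := NormedSpace.induced ℝ Cl3 _ toLp

end Cl3

/-- Embedding of vectors `ℝ³ ⊂ ℝ_{0,3}`. -/
def ι3 : V3 →ₗ[ℝ] Cl3 := CliffordAlgebra.ι Q3

/-- `ψ` is a structural set: `ψⁱψʲ + ψʲψⁱ = -2δᵢⱼ` inside `ℝ_{0,3}`. -/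
def StructuralSet (ψ : Fin 3 → V3) : Prop :=
  ∀ i j, ι3 (ψ i) * ι3 (ψ j) + ι3 (ψ j) * ι3 (ψ i)
      = algebraMap ℝ Cl3 (if i = j then -2 else 0)

/-- Partial derivative `∂f/∂xᵢ`. -/
def pd (i : Fin 3) (f : V3 → Cl3) : V3 → Cl3 := fun x => fderiv ℝ f x (Pi.single i 1)

/-- Left Dirac operator `ψ∂ f = Σᵢ ψⁱ ∂f/∂xᵢ`. -/
def DL (ψ : Fin 3 → V3) (f : V3 → Cl3) : V3 → Cl3 := fun x => ∑ i, ι3 (ψ i) * pd i f x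

/-- Right Dirac operator `f ψ∂ = Σᵢ (∂f/∂xᵢ) ψⁱ`. -/
def DR (ψ : Fin 3 → V3) (f : V3 → Cl3) : V3 → Cl3 := fun x => ∑ i, pd i f x * ι3 (ψ i)

/-- Two-sided operator `φ∂ f ψ∂ = Σᵢⱼ φⁱ (∂²f/∂xᵢ∂xⱼ) ψʲ`. -/
def DLR (φ ψ : Fin 3 → V3) (f : V3 → Cl3) : V3 → Cl3 :=
  fun x => ∑ i, ∑ j, ι3 (φ i) * pd i (pd j f) x * ι3 (ψ j)

/-- Componentwise Laplacian. -/
def lap (f : V3 → Cl3) : V3 → Cl3 := fun x => ∑ i, pd i (pd i f) x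

/-- `ν(a) = Σᵢ ψⁱ a ψⁱ`. -/
def nu (ψ : Fin 3 → V3) (a : Cl3) : Cl3 := ∑ i, ι3 (ψ i) * a * ι3 (ψ i)

/-- `ω(a) = Σᵢ φⁱ a ψⁱ`. -/
def om (φ ψ : Fin 3 → V3) (a : Cl3) : Cl3 := ∑ i, ι3 (φ i) * a * ι3 (ψ i)

/-- `x_ψ = Σᵢ ψⁱ xᵢ`. -/
def xPsi (ψ : Fin 3 → V3) (x : V3) : Cl3 := ∑ i, x i • ι3 (ψ i)

/-! ### Auxiliary developments -/

section Aux

/-! #### Finite-dimensionality of `Cl3` -/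

def ee (i : Fin 3) : Cl3 := ι3 (Pi.single i 1)

lemma Q3_single (i : Fin 3) : Q3 (Pi.single i 1) = -1 := by
  simp [Q3, QuadraticMap.weightedSumSquares_apply, Pi.single_apply]

lemma ee_sq (i : Fin 3) : ee i * ee i = -1 := by
  rw [ee, ι3, CliffordAlgebra.ι_sq_scalar, Q3_single]; simp

lemma ee_sq' (i : Fin 3) (x : Cl3) : ee i * (ee i * x) = -x := by
  rw [← mul_assoc, ee_sq]; simp

lemma ee_swap {i j : Fin 3} (h : i ≠ j) : ee j * ee i = -(ee i * ee j) := by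
  have hp : QuadraticMap.polar Q3 (Pi.single i 1) (Pi.single j 1) = 0 := by
    simp only [QuadraticMap.polar, Q3, QuadraticMap.neg_apply,
      QuadraticMap.weightedSumSquares_apply, one_smul, Pi.add_apply, smul_eq_mul]
    rw [Fin.sum_univ_three, Fin.sum_univ_three, Fin.sum_univ_three]
    fin_cases i <;> fin_cases j <;> simp_all
  have := CliffordAlgebra.ι_mul_ι_add_swap (Q := Q3) (Pi.single i 1) (Pi.single j 1)
  rw [hp] at this
  simp only [map_zero] at this
  exact eq_neg_of_add_eq_zero_right this

lemma ee_swap' {i j : Fin 3} (h : i ≠ j) (x : Cl3) :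
    ee j * (ee i * x) = -(ee i * (ee j * x)) := by
  rw [← mul_assoc, ee_swap h]; simp [mul_assoc]

lemma s10 : ee 1 * ee 0 = -(ee 0 * ee 1) := ee_swap (by decide)
lemma s20 : ee 2 * ee 0 = -(ee 0 * ee 2) := ee_swap (by decide)
lemma s21 : ee 2 * ee 1 = -(ee 1 * ee 2) := ee_swap (by decide)
lemma s10' (x : Cl3) : ee 1 * (ee 0 * x) = -(ee 0 * (ee 1 * x)) := ee_swap' (by decide) x
lemma s20' (x : Cl3) : ee 2 * (ee 0 * x) = -(ee 0 * (ee 2 * x)) := ee_swap' (by decide) x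
lemma s21' (x : Cl3) : ee 2 * (ee 1 * x) = -(ee 1 * (ee 2 * x)) := ee_swap' (by decide) x

def genS : Set Cl3 :=
  {1, ee 0, ee 1, ee 2, ee 0 * ee 1, ee 0 * ee 2, ee 1 * ee 2, ee 0 * (ee 1 * ee 2)}

def SS : Submodule ℝ Cl3 := Submodule.span ℝ genS

lemma mem_SS_top : ∀ x : Cl3, x ∈ SS := by
  have h1 : (1:Cl3) ∈ SS := Submodule.subset_span (Or.inl rfl)
  have h2 : ee 0 ∈ SS := Submodule.subset_span (Or.inr (Or.inl rfl))
  have h3 : ee 1 ∈ SS := Submodule.subset_span (Or.inr (Or.inr (Or.inl rfl)))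
  have h4 : ee 2 ∈ SS := Submodule.subset_span (Or.inr (Or.inr (Or.inr (Or.inl rfl))))
  have h5 : ee 0 * ee 1 ∈ SS :=
    Submodule.subset_span (Or.inr (Or.inr (Or.inr (Or.inr (Or.inl rfl)))))
  have h6 : ee 0 * ee 2 ∈ SS :=
    Submodule.subset_span (Or.inr (Or.inr (Or.inr (Or.inr (Or.inr (Or.inl rfl))))))
  have h7 : ee 1 * ee 2 ∈ SS :=
    Submodule.subset_span (Or.inr (Or.inr (Or.inr (Or.inr (Or.inr (Or.inr (Or.inl rfl)))))))
  have h8 : ee 0 * (ee 1 * ee 2) ∈ SS :=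
    Submodule.subset_span (Or.inr (Or.inr (Or.inr (Or.inr (Or.inr (Or.inr (Or.inr rfl)))))))
  have hgen : ∀ a ∈ genS, ∀ b ∈ genS, a * b ∈ SS := by
    intro a ha b hb
    simp only [genS, Set.mem_insert_iff, Set.mem_singleton_iff] at ha hb
    rcases ha with rfl|rfl|rfl|rfl|rfl|rfl|rfl|rfl <;> (try
      rcases hb with rfl|rfl|rfl|rfl|rfl|rfl|rfl|rfl <;> (try
      simp only [mul_assoc, one_mul, mul_one, ee_sq, ee_sq', s10, s20, s21, s10', s20', s21',
        mul_neg, neg_mul, neg_neg, mul_one, one_mul])) <;>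
      first
        | exact h1 | exact h2 | exact h3 | exact h4 | exact h5 | exact h6 | exact h7 | exact h8
        | exact SS.neg_mem h1 | exact SS.neg_mem h2 | exact SS.neg_mem h3 | exact SS.neg_mem h4
        | exact SS.neg_mem h5 | exact SS.neg_mem h6 | exact SS.neg_mem h7 | exact SS.neg_mem h8
  have hmul : ∀ a ∈ SS, ∀ b ∈ SS, a * b ∈ SS := by
    intro a ha b hb
    induction ha using Submodule.span_induction with
    | mem x hx =>
      induction hb using Submodule.span_induction with
      | mem y hy => exact hgen x hx y hy
      | zero => simpa using SS.zero_mem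
      | add y z _ _ iy iz => rw [mul_add]; exact SS.add_mem iy iz
      | smul c y _ iy => rw [mul_smul_comm]; exact SS.smul_mem c iy
    | zero => simpa using SS.zero_mem
    | add x y _ _ ix iy => rw [add_mul]; exact SS.add_mem ix iy
    | smul c x _ ix => rw [smul_mul_assoc]; exact SS.smul_mem c ix
  intro x
  induction x using CliffordAlgebra.induction with
  | algebraMap r => rw [Algebra.algebraMap_eq_smul_one]; exact SS.smul_mem r h1
  | ι m =>
    have hm : (CliffordAlgebra.ι Q3) m = m 0 • ee 0 + m 1 • ee 1 + m 2 • ee 2 := by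
      have : m = m 0 • (Pi.single 0 1 : V3) + m 1 • (Pi.single 1 1 : V3)
          + m 2 • (Pi.single 2 1 : V3) := by
        funext j; fin_cases j <;> simp
      rw [this]; simp [ee, ι3]
    rw [hm]
    exact SS.add_mem (SS.add_mem (SS.smul_mem _ h2) (SS.smul_mem _ h3)) (SS.smul_mem _ h4)
  | mul a b ha hb => exact hmul a ha b hb
  | add a b ha hb => exact SS.add_mem ha hb

instance : Module.Finite ℝ Cl3 := by
  rw [Module.finite_def]
  have h : SS = ⊤ := top_unique fun x _ => mem_SS_top x
  rw [← h]
  have hfin : genS.Finite := by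
    unfold genS
    exact (Set.finite_singleton _).insert _ |>.insert _ |>.insert _ |>.insert _
      |>.insert _ |>.insert _ |>.insert _
  exact Submodule.fg_span hfin

/-! #### Algebraic core -/

lemma lemL (φ : Fin 3 → V3) (hφ : StructuralSet φ) (A : Fin 3 → Fin 3 → Cl3)
    (hA : ∀ i j, A i j = A j i) :
    ∑ i, ∑ j, ι3 (φ j) * ι3 (φ i) * A i j = -∑ i, A i i := by
  have key : (2:ℝ) • (∑ i, ∑ j, ι3 (φ j) * ι3 (φ i) * A i j)
      = (2:ℝ) • (-∑ i, A i i) := by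
    have hswap : (∑ i, ∑ j, ι3 (φ j) * ι3 (φ i) * A i j)
        = ∑ i, ∑ j, ι3 (φ i) * ι3 (φ j) * A i j := by
      rw [Finset.sum_comm]
      exact Finset.sum_congr rfl fun i _ => Finset.sum_congr rfl fun j _ => by rw [hA]
    calc (2:ℝ) • (∑ i, ∑ j, ι3 (φ j) * ι3 (φ i) * A i j)
        = (∑ i, ∑ j, ι3 (φ j) * ι3 (φ i) * A i j)
          + ∑ i, ∑ j, ι3 (φ i) * ι3 (φ j) * A i j := by rw [← hswap, two_smul]
      _ = ∑ i, ∑ j, (ι3 (φ i) * ι3 (φ j) + ι3 (φ j) * ι3 (φ i)) * A i j := by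
          rw [← Finset.sum_add_distrib]
          exact Finset.sum_congr rfl fun i _ => by
            rw [← Finset.sum_add_distrib]
            exact Finset.sum_congr rfl fun j _ => by rw [add_mul]; rw [add_comm]
      _ = ∑ i, ∑ j, (if i = j then (-2:ℝ) else 0) • A i j := by
          refine Finset.sum_congr rfl fun i _ => Finset.sum_congr rfl fun j _ => ?_
          rw [hφ i j, ← Algebra.smul_def]
      _ = ∑ i, (-2:ℝ) • A i i := by
          refine Finset.sum_congr rfl fun i _ => ?_
          simp [ite_smul]
      _ = (2:ℝ) • (-∑ i, A i i) := by
          rw [smul_neg, ← Finset.smul_sum, ← neg_smul]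
  exact smul_right_injective Cl3 two_ne_zero key

lemma lemR (ψ : Fin 3 → V3) (hψ : StructuralSet ψ) (A : Fin 3 → Fin 3 → Cl3)
    (hA : ∀ i j, A i j = A j i) :
    ∑ i, ∑ j, A i j * (ι3 (ψ j) * ι3 (ψ i)) = -∑ i, A i i := by
  have key : (2:ℝ) • (∑ i, ∑ j, A i j * (ι3 (ψ j) * ι3 (ψ i)))
      = (2:ℝ) • (-∑ i, A i i) := by
    have hswap : (∑ i, ∑ j, A i j * (ι3 (ψ j) * ι3 (ψ i)))
        = ∑ i, ∑ j, A i j * (ι3 (ψ i) * ι3 (ψ j)) := by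
      rw [Finset.sum_comm]
      exact Finset.sum_congr rfl fun i _ => Finset.sum_congr rfl fun j _ => by rw [hA]
    calc (2:ℝ) • (∑ i, ∑ j, A i j * (ι3 (ψ j) * ι3 (ψ i)))
        = (∑ i, ∑ j, A i j * (ι3 (ψ j) * ι3 (ψ i)))
          + ∑ i, ∑ j, A i j * (ι3 (ψ i) * ι3 (ψ j)) := by rw [← hswap, two_smul]
      _ = ∑ i, ∑ j, A i j * (ι3 (ψ i) * ι3 (ψ j) + ι3 (ψ j) * ι3 (ψ i)) := by
          rw [← Finset.sum_add_distrib]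
          exact Finset.sum_congr rfl fun i _ => by
            rw [← Finset.sum_add_distrib]
            exact Finset.sum_congr rfl fun j _ => by rw [mul_add]; rw [add_comm]
      _ = ∑ i, ∑ j, (if i = j then (-2:ℝ) else 0) • A i j := by
          refine Finset.sum_congr rfl fun i _ => Finset.sum_congr rfl fun j _ => ?_
          rw [hψ i j, ← Algebra.commutes, ← Algebra.smul_def]
      _ = ∑ i, (-2:ℝ) • A i i := by
          refine Finset.sum_congr rfl fun i _ => ?_
          simp [ite_smul]
      _ = (2:ℝ) • (-∑ i, A i i) := by
          rw [smul_neg, ← Finset.smul_sum, ← neg_smul]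
  exact smul_right_injective Cl3 two_ne_zero key

lemma keyAlg (φ ψ : Fin 3 → V3) (hφ : StructuralSet φ) (hψ : StructuralSet ψ)
    (A : Fin 3 → Fin 3 → Cl3) (hA : ∀ i j, A i j = A j i) :
    ∑ i, ∑ j, ι3 (φ i) * (∑ k, ι3 (φ k) * A i j * ι3 (ψ k)) * ι3 (ψ j)
      = ∑ k, ι3 (φ k) * (∑ i, ∑ j, ι3 (φ i) * A i j * ι3 (ψ j)) * ι3 (ψ k) := by
  have hterm : ∀ i j k : Fin 3,
      ι3 (φ i) * (ι3 (φ k) * A i j * ι3 (ψ k)) * ι3 (ψ j)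
      = (if i = k then (-2:ℝ) else 0) • ((if k = j then (-2:ℝ) else 0) • A i j)
        - (if i = k then (-2:ℝ) else 0) • (A i j * (ι3 (ψ j) * ι3 (ψ k)))
        - (if k = j then (-2:ℝ) else 0) • (ι3 (φ k) * ι3 (φ i) * A i j)
        + ι3 (φ k) * ι3 (φ i) * A i j * (ι3 (ψ j) * ι3 (ψ k)) := by
    intro i j k
    have h1 : ι3 (φ i) * ι3 (φ k)
        = algebraMap ℝ Cl3 (if i = k then (-2:ℝ) else 0) - ι3 (φ k) * ι3 (φ i) :=
      eq_sub_of_add_eq (hφ i k)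
    have h2 : ι3 (ψ k) * ι3 (ψ j)
        = algebraMap ℝ Cl3 (if k = j then (-2:ℝ) else 0) - ι3 (ψ j) * ι3 (ψ k) :=
      eq_sub_of_add_eq (hψ k j)
    have expand : ι3 (φ i) * (ι3 (φ k) * A i j * ι3 (ψ k)) * ι3 (ψ j)
        = (ι3 (φ i) * ι3 (φ k)) * A i j * (ι3 (ψ k) * ι3 (ψ j)) := by
      noncomm_ring
    rw [expand, h1, h2]
    simp only [sub_mul, mul_sub, ← Algebra.commutes, ← Algebra.smul_def, smul_mul_assoc]
    module
  calc ∑ i, ∑ j, ι3 (φ i) * (∑ k, ι3 (φ k) * A i j * ι3 (ψ k)) * ι3 (ψ j)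
      = ∑ i, ∑ j, ∑ k, ι3 (φ i) * (ι3 (φ k) * A i j * ι3 (ψ k)) * ι3 (ψ j) := by
        refine Finset.sum_congr rfl fun i _ => Finset.sum_congr rfl fun j _ => ?_
        rw [Finset.mul_sum, Finset.sum_mul]
    _ = (∑ i, ∑ j, ∑ k, (if i = k then (-2:ℝ) else 0)
            • ((if k = j then (-2:ℝ) else 0) • A i j))
        - (∑ i, ∑ j, ∑ k, (if i = k then (-2:ℝ) else 0)
            • (A i j * (ι3 (ψ j) * ι3 (ψ k))))
        - (∑ i, ∑ j, ∑ k, (if k = j then (-2:ℝ) else 0)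
            • (ι3 (φ k) * ι3 (φ i) * A i j))
        + ∑ i, ∑ j, ∑ k, ι3 (φ k) * ι3 (φ i) * A i j * (ι3 (ψ j) * ι3 (ψ k)) := by
        simp only [hterm, Finset.sum_add_distrib, Finset.sum_sub_distrib]
    _ = ∑ k, ι3 (φ k) * (∑ i, ∑ j, ι3 (φ i) * A i j * ι3 (ψ j)) * ι3 (ψ k) := by
        have e1 : (∑ i, ∑ j, ∑ k, (if i = k then (-2:ℝ) else 0)
              • ((if k = j then (-2:ℝ) else 0) • A i j)) = (4:ℝ) • ∑ i, A i i := by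
          simp only [smul_smul, mul_ite, mul_zero, ite_mul, zero_mul, ite_smul, zero_smul,
            smul_ite, smul_zero, Finset.sum_ite_eq, Finset.sum_ite_eq', Finset.mem_univ,
            if_true]
          rw [← Finset.smul_sum]
          norm_num
        have e2 : (∑ i, ∑ j, ∑ k, (if i = k then (-2:ℝ) else 0)
              • (A i j * (ι3 (ψ j) * ι3 (ψ k)))) = (-2:ℝ) • -∑ i, A i i := by
          simp only [ite_smul, zero_smul, Finset.sum_ite_eq, Finset.mem_univ, if_true]
          simp only [← Finset.smul_sum]
          rw [lemR ψ hψ A hA]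
        have e3 : (∑ i, ∑ j, ∑ k, (if k = j then (-2:ℝ) else 0)
              • (ι3 (φ k) * ι3 (φ i) * A i j)) = (-2:ℝ) • -∑ i, A i i := by
          simp only [ite_smul, zero_smul, Finset.sum_ite_eq', Finset.mem_univ, if_true]
          simp only [← Finset.smul_sum]
          rw [lemL φ hφ A hA]
        have e4 : (∑ i, ∑ j, ∑ k, ι3 (φ k) * ι3 (φ i) * A i j * (ι3 (ψ j) * ι3 (ψ k)))
            = ∑ k, ι3 (φ k) * (∑ i, ∑ j, ι3 (φ i) * A i j * ι3 (ψ j)) * ι3 (ψ k) := by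
          have hcube : (∑ i, ∑ j, ∑ k, ι3 (φ k) * ι3 (φ i) * A i j * (ι3 (ψ j) * ι3 (ψ k)))
              = ∑ k, ∑ i, ∑ j, ι3 (φ k) * ι3 (φ i) * A i j * (ι3 (ψ j) * ι3 (ψ k)) :=
            (Finset.sum_congr rfl fun i _ => Finset.sum_comm).trans Finset.sum_comm
          rw [hcube]
          refine Finset.sum_congr rfl fun k _ => ?_
          simp only [Finset.mul_sum, Finset.sum_mul]
          refine Finset.sum_congr rfl fun i _ => Finset.sum_congr rfl fun j _ => ?_
          noncomm_ring
        rw [e1, e2, e3, e4]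
        module

/-! #### Analytic lemmas -/

def omL (φ ψ : Fin 3 → V3) : Cl3 →ₗ[ℝ] Cl3 where
  toFun := om φ ψ
  map_add' a b := by simp [om, mul_add, add_mul, Finset.sum_add_distrib]
  map_smul' c a := by simp [om, Finset.smul_sum, mul_smul_comm, smul_mul_assoc]

def omCLM (φ ψ : Fin 3 → V3) : Cl3 →L[ℝ] Cl3 := LinearMap.toContinuousLinearMap (omL φ ψ)

lemma omCLM_apply (φ ψ : Fin 3 → V3) (a : Cl3) : omCLM φ ψ a = om φ ψ a := rfl

lemma pd_comp (L : Cl3 →L[ℝ] Cl3) {g : V3 → Cl3} (hg : Differentiable ℝ g) (i : Fin 3)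
    (x : V3) : pd i (fun y => L (g y)) x = L (pd i g x) := by
  have h := (L.hasFDerivAt.comp x (hg x).hasFDerivAt).fderiv
  simp only [pd]
  have hfun : (fun y => L (g y)) = (⇑L) ∘ g := rfl
  rw [hfun, h]
  rfl

lemma pd_pd_eq (f : V3 → Cl3) (hf : ContDiff ℝ 2 f) (i j : Fin 3) (x : V3) :
    pd i (pd j f) x = fderiv ℝ (fderiv ℝ f) x (Pi.single i 1) (Pi.single j 1) := by
  have h1 : ContDiff ℝ 1 (fderiv ℝ f) := hf.fderiv_right (by norm_num)
  have hd1 : DifferentiableAt ℝ (fderiv ℝ f) x := (h1.differentiable (by norm_num)) x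
  have hpd : pd j f = fun y => fderiv ℝ f y (Pi.single j 1) := rfl
  simp only [pd, hpd]
  rw [fderiv_clm_apply hd1 (differentiableAt_const _)]
  simp

lemma pd_symm (f : V3 → Cl3) (hf : ContDiff ℝ 2 f) (i j : Fin 3) (x : V3) :
    pd i (pd j f) x = pd j (pd i f) x := by
  have hdf : Differentiable ℝ f := hf.differentiable (by norm_num)
  have h1 : ContDiff ℝ 1 (fderiv ℝ f) := hf.fderiv_right (by norm_num)
  rw [pd_pd_eq f hf i j x, pd_pd_eq f hf j i x]
  exact second_derivative_symmetric (fun y => (hdf y).hasFDerivAt)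
    ((h1.differentiable (by norm_num) x).hasFDerivAt) _ _

end Aux

/-- `φ∂[ω(f)]ψ∂ = ω(φ∂ f ψ∂)` where `ω(f) = Σᵢ φⁱ f ψⁱ`. -/


theorem stmt5 (φ ψ : Fin 3 → V3) (hφ : StructuralSet φ) (hψ : StructuralSet ψ)
    (f : V3 → Cl3) (hf : ContDiff ℝ 2 f) :
    ∀ x, DLR φ ψ (fun y => om φ ψ (f y)) x = om φ ψ (DLR φ ψ f x) := by
  intro x
  have hdf : Differentiable ℝ f := hf.differentiable (by norm_num)
  have h1 : ContDiff ℝ 1 (fderiv ℝ f) := hf.fderiv_right (by norm_num)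
  have hpdj : ∀ j : Fin 3, Differentiable ℝ (pd j f) := by
    intro j
    have : ContDiff ℝ 1 (pd j f) := h1.clm_apply contDiff_const
    exact this.differentiable (by norm_num)
  have hkey : ∀ i j : Fin 3, pd i (pd j (fun y => om φ ψ (f y))) x
      = om φ ψ (pd i (pd j f) x) := by
    intro i j
    have h2 : pd j (fun y => om φ ψ (f y)) = fun y => omCLM φ ψ (pd j f y) := by
      funext y
      exact pd_comp (omCLM φ ψ) hdf j y
    rw [h2, pd_comp (omCLM φ ψ) (hpdj j) i x]
    rfl
  have hA : ∀ i j : Fin 3, pd i (pd j f) x = pd j (pd i f) x := fun i j =>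
    pd_symm f hf i j x
  simp only [DLR, om]
  calc ∑ i, ∑ j, ι3 (φ i) * pd i (pd j fun y => ∑ k, ι3 (φ k) * f y * ι3 (ψ k)) x * ι3 (ψ j)
      = ∑ i, ∑ j, ι3 (φ i) * (∑ k, ι3 (φ k) * pd i (pd j f) x * ι3 (ψ k)) * ι3 (ψ j) := by
        refine Finset.sum_congr rfl fun i _ => Finset.sum_congr rfl fun j _ => ?_
        have := hkey i j
        simp only [om] at this
        rw [this]
    _ = ∑ k, ι3 (φ k) * (∑ i, ∑ j, ι3 (φ i) * pd i (pd j f) x * ι3 (ψ j)) * ι3 (ψ k) :=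
        keyAlg φ ψ hφ hψ (fun i j => pd i (pd j f) x) hA
end
end

section
/- Let φ, ψ be structural sets and f a C² function from ℝ³ to ℝ_{0,3} with ω(f) = Σᵢ φⁱ f ψⁱ. Then ψ∂ φ∂[ω(f)] − ω(φ∂ ψ∂ f) = φ∂[ω(ψ∂ f)] − ψ∂[ω(φ∂ f)]. -/
noncomputable section

namespace Stmt10Aux

/-! ### Finite-dimensionality of `Cl3` -/

def g (i : Fin 3) : Cl3 := ι3 (Pi.single i 1)

lemma Q3_single (i : Fin 3) : Q3 (Pi.single i 1) = -1 := by
  simp [Q3, QuadraticMap.weightedSumSquares_apply]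
  rw [Finset.sum_eq_single i] <;> simp +contextual [Pi.single_apply]

lemma gsq (i : Fin 3) : g i * g i = -1 := by
  rw [g, ι3, CliffordAlgebra.ι_sq_scalar, Q3_single, map_neg, map_one]

lemma polar_single (i j : Fin 3) (h : i ≠ j) :
    QuadraticMap.polar Q3 (Pi.single i 1) (Pi.single j 1) = 0 := by
  simp only [QuadraticMap.polar, Q3, QuadraticMap.neg_apply,
    QuadraticMap.weightedSumSquares_apply, smul_eq_mul, one_mul, Pi.add_apply]
  have key : ∀ x : Fin 3, ((Pi.single i 1 : V3) x + (Pi.single j 1 : V3) x) *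
        ((Pi.single i 1 : V3) x + (Pi.single j 1 : V3) x)
      = (Pi.single i 1 : V3) x * (Pi.single i 1 : V3) x
        + (Pi.single j 1 : V3) x * (Pi.single j 1 : V3) x := by
    intro x
    by_cases h1 : i = x <;> by_cases h2 : j = x <;> simp_all [Pi.single_apply]
  simp [key, Finset.sum_add_distrib]

lemma ganti {i j : Fin 3} (h : i ≠ j) : g i * g j = -(g j * g i) := by
  have := CliffordAlgebra.ι_mul_ι_add_swap (Q := Q3) (Pi.single i 1) (Pi.single j 1)
  rw [polar_single i j h, map_zero] at this
  rw [g, g, ι3]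
  exact eq_neg_of_add_eq_zero_left this

lemma ganti' {i j : Fin 3} (h : i ≠ j) (x : Cl3) :
    g i * (g j * x) = -(g j * (g i * x)) := by
  rw [← mul_assoc, ganti h, neg_mul, mul_assoc]

lemma gsq' (i : Fin 3) (x : Cl3) : g i * (g i * x) = -x := by
  rw [← mul_assoc, gsq, neg_one_mul]

def M (c : Bool × Bool × Bool) : Cl3 :=
  (if c.1 then g 0 else 1) * ((if c.2.1 then g 1 else 1) * (if c.2.2 then g 2 else 1))

def S : Submodule ℝ Cl3 := Submodule.span ℝ (Set.range M)

lemma mem_S (c : Bool × Bool × Bool) : M c ∈ S := Submodule.subset_span ⟨c, rfl⟩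

lemma g_mul_M (i : Fin 3) (c : Bool × Bool × Bool) : g i * M c ∈ S := by
  obtain ⟨a, b, d⟩ := c
  have m000 : (1:Cl3) ∈ S := by simpa [M] using mem_S (false, false, false)
  have m100 : g 0 ∈ S := by simpa [M] using mem_S (true, false, false)
  have m010 : g 1 ∈ S := by simpa [M] using mem_S (false, true, false)
  have m001 : g 2 ∈ S := by simpa [M] using mem_S (false, false, true)
  have m110 : g 0 * g 1 ∈ S := by simpa [M] using mem_S (true, true, false)
  have m101 : g 0 * g 2 ∈ S := by simpa [M] using mem_S (true, false, true)
  have m011 : g 1 * g 2 ∈ S := by simpa [M] using mem_S (false, true, true)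
  have m111 : g 0 * (g 1 * g 2) ∈ S := by simpa [M] using mem_S (true, true, true)
  have h10 := ganti' (show (1:Fin 3) ≠ 0 by decide)
  have h20 := ganti' (show (2:Fin 3) ≠ 0 by decide)
  have h21 := ganti' (show (2:Fin 3) ≠ 1 by decide)
  have p10 := ganti (show (1:Fin 3) ≠ 0 by decide)
  have p20 := ganti (show (2:Fin 3) ≠ 0 by decide)
  have p21 := ganti (show (2:Fin 3) ≠ 1 by decide)
  fin_cases i <;> rcases a <;> rcases b <;> rcases d <;>
    simp [M, mul_one, one_mul, mul_assoc, gsq, gsq', h10, h20, h21, p10, p20, p21,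
      mul_neg, neg_neg, neg_mul] <;>
    solve_by_elim [Submodule.neg_mem]

lemma span_top : S = ⊤ := by
  rw [Submodule.eq_top_iff']
  intro x
  have main : ∀ y : Cl3, ∀ z ∈ S, y * z ∈ S := by
    intro y
    induction y using CliffordAlgebra.induction with
    | algebraMap r => intro z hz; rw [Algebra.algebraMap_eq_smul_one, smul_mul_assoc, one_mul]
                      exact S.smul_mem r hz
    | ι v =>
      intro z hz
      have hv : (CliffordAlgebra.ι Q3) v = ∑ i, v i • g i := by
        rw [show v = ∑ i, v i • (Pi.single i 1 : V3) by
          ext k; simp [Pi.single_apply, Finset.sum_apply]]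
        simp [g, ι3, Finset.sum_apply,
          Finset.smul_sum, Pi.single_apply, smul_smul]
      have hg : ∀ (i : Fin 3), ∀ w ∈ S, g i * w ∈ S := by
        intro i w hw
        induction hw using Submodule.span_induction with
        | mem u hu => obtain ⟨c, rfl⟩ := hu; exact g_mul_M i c
        | zero => simp
        | add a b _ _ ha hb => rw [mul_add]; exact S.add_mem ha hb
        | smul r a _ ha => rw [mul_smul_comm]; exact S.smul_mem r ha
      rw [hv, Finset.sum_mul]
      refine S.sum_mem fun i _ => ?_
      rw [smul_mul_assoc]
      exact S.smul_mem _ (hg i z hz)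
    | mul a b ha hb => intro z hz; rw [mul_assoc]; exact ha _ (hb _ hz)
    | add a b ha hb => intro z hz; rw [add_mul]; exact S.add_mem (ha z hz) (hb z hz)
  simpa using main x 1 (by simpa [M] using mem_S (false, false, false))

instance : Module.Finite ℝ Cl3 := by
  have h : Module.Finite ℝ ↥S := Module.Finite.span_of_finite ℝ (Set.finite_range M)
  rw [span_top] at h
  exact Module.Finite.equiv (Submodule.topEquiv)

instance : FiniteDimensional ℝ Cl3 := inferInstance

/-! ### `om` and left multiplication as continuous linear maps -/

def omL (φ ψ : Fin 3 → V3) : Cl3 →ₗ[ℝ] Cl3 :=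
  ∑ i, (LinearMap.mulLeft ℝ (ι3 (φ i))) ∘ₗ (LinearMap.mulRight ℝ (ι3 (ψ i)))

@[simp] lemma omL_apply (φ ψ : Fin 3 → V3) (a : Cl3) : omL φ ψ a = om φ ψ a := by
  simp [omL, om, LinearMap.sum_apply, mul_assoc]

def omCLM (φ ψ : Fin 3 → V3) : Cl3 →L[ℝ] Cl3 := LinearMap.toContinuousLinearMap (omL φ ψ)

@[simp] lemma omCLM_apply (φ ψ : Fin 3 → V3) (a : Cl3) : omCLM φ ψ a = om φ ψ a :=
  omL_apply φ ψ a

def mulCLM (a : Cl3) : Cl3 →L[ℝ] Cl3 := LinearMap.toContinuousLinearMap (LinearMap.mulLeft ℝ a)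

@[simp] lemma mulCLM_apply (a b : Cl3) : mulCLM a b = a * b := rfl

lemma om_sum {α : Type*} (φ ψ : Fin 3 → V3) (s : Finset α) (h : α → Cl3) :
    om φ ψ (∑ j ∈ s, h j) = ∑ j ∈ s, om φ ψ (h j) := by
  have h2 := map_sum (omL φ ψ) h s
  simp only [omL_apply] at h2
  exact h2

/-! ### Derivative lemmas -/

lemma pd_clm (T : Cl3 →L[ℝ] Cl3) (g : V3 → Cl3) {x : V3} (hg : DifferentiableAt ℝ g x)
    (i : Fin 3) : pd i (fun y => T (g y)) x = T (pd i g x) := by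
  unfold pd
  rw [show (fun y => T (g y)) = T ∘ g from rfl, fderiv_comp x T.differentiableAt hg,
    ContinuousLinearMap.fderiv]
  rfl

lemma pd_sum (g : Fin 3 → V3 → Cl3) {x : V3} (hg : ∀ j, DifferentiableAt ℝ (g j) x)
    (i : Fin 3) : pd i (fun y => ∑ j, g j y) x = ∑ j, pd i (g j) x := by
  unfold pd
  rw [fderiv_fun_sum (fun j _ => hg j)]
  simp

variable {f : V3 → Cl3}

lemma pd_pd (hf : ContDiff ℝ 2 f) (x : V3) (i j : Fin 3) :
    pd i (pd j f) x = fderiv ℝ (fderiv ℝ f) x (Pi.single i 1) (Pi.single j 1) := by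
  have h1 : ContDiff ℝ 1 (fderiv ℝ f) := hf.fderiv_right (by norm_num)
  unfold pd
  rw [fderiv_clm_apply (h1.differentiable one_ne_zero x) (differentiableAt_const _)]
  simp

lemma pd_symm (hf : ContDiff ℝ 2 f) (x : V3) (i j : Fin 3) :
    pd i (pd j f) x = pd j (pd i f) x := by
  rw [pd_pd hf x i j, pd_pd hf x j i]
  exact (hf.contDiffAt.isSymmSndFDerivAt (by simp [minSmoothness_of_isRCLikeNormedField])) _ _

lemma pd_contDiff (hf : ContDiff ℝ 2 f) (j : Fin 3) : ContDiff ℝ 1 (pd j f) := by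
  have h1 : ContDiff ℝ 1 (fderiv ℝ f) := hf.fderiv_right (by norm_num)
  exact h1.clm_apply contDiff_const

/-! ### Algebraic key identity -/

lemma key (φ ψ : Fin 3 → V3) (hφ : StructuralSet φ) (i j : Fin 3) (a : Cl3) :
    ι3 (ψ i) * (ι3 (φ j) * om φ ψ a) + ι3 (ψ i) * om φ ψ (ι3 (φ j) * a)
      = ι3 (φ j) * om φ ψ (ι3 (ψ i) * a) + om φ ψ (ι3 (φ j) * (ι3 (ψ i) * a)) := by
  unfold om
  rw [Finset.mul_sum, Finset.mul_sum, Finset.mul_sum, Finset.mul_sum,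
    ← Finset.sum_add_distrib, ← Finset.sum_add_distrib]
  refine Finset.sum_congr rfl fun k _ => ?_
  have hrel := hφ j k
  have l1 : ι3 (ψ i) * (ι3 (φ j) * (ι3 (φ k) * a * ι3 (ψ k)))
      = ι3 (ψ i) * ((ι3 (φ j) * ι3 (φ k)) * (a * ι3 (ψ k))) := by noncomm_ring
  have l2 : ι3 (ψ i) * (ι3 (φ k) * (ι3 (φ j) * a) * ι3 (ψ k))
      = ι3 (ψ i) * ((ι3 (φ k) * ι3 (φ j)) * (a * ι3 (ψ k))) := by noncomm_ring
  have r1 : ι3 (φ j) * (ι3 (φ k) * (ι3 (ψ i) * a) * ι3 (ψ k))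
      = (ι3 (φ j) * ι3 (φ k)) * (ι3 (ψ i) * (a * ι3 (ψ k))) := by noncomm_ring
  have r2 : ι3 (φ k) * (ι3 (φ j) * (ι3 (ψ i) * a)) * ι3 (ψ k)
      = (ι3 (φ k) * ι3 (φ j)) * (ι3 (ψ i) * (a * ι3 (ψ k))) := by noncomm_ring
  rw [l1, l2, r1, r2, ← mul_add, ← add_mul, ← add_mul, hrel,
    ← mul_assoc, ← Algebra.commutes, mul_assoc]

end Stmt10Aux

/-- `ψ∂φ∂[ω(f)] - ω(φ∂ψ∂f) = φ∂[ω(ψ∂f)] - ψ∂[ω(φ∂f)]`. -/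
theorem stmt10 (φ ψ : Fin 3 → V3) (hφ : StructuralSet φ) (hψ : StructuralSet ψ)
    (f : V3 → Cl3) (hf : ContDiff ℝ 2 f) :
    ∀ x, DL ψ (DL φ (fun y => om φ ψ (f y))) x - om φ ψ (DL φ (DL ψ f) x) =
      DL φ (fun y => om φ ψ (DL ψ f y)) x - DL ψ (fun y => om φ ψ (DL φ f y)) x := by
  classical
  intro x
  have hdf : ∀ y, DifferentiableAt ℝ f y :=
    fun y => (hf.differentiable two_ne_zero).differentiableAt
  have hdpd : ∀ (j : Fin 3) (y : V3), DifferentiableAt ℝ (pd j f) y :=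
    fun j y => ((Stmt10Aux.pd_contDiff hf j).differentiable one_ne_zero) y
  have hdDL : ∀ (θ : Fin 3 → V3) (y : V3), DifferentiableAt ℝ (DL θ f) y := by
    intro θ y
    have hfun : DL θ f = fun z => ∑ i, Stmt10Aux.mulCLM (ι3 (θ i)) (pd i f z) := by
      funext z; simp [DL]
    rw [hfun]
    exact DifferentiableAt.fun_sum fun i _ =>
      (Stmt10Aux.mulCLM (ι3 (θ i))).differentiableAt.comp y (hdpd i y)
  have stepB : ∀ (θ : Fin 3 → V3) (k : Fin 3) (y : V3),
      pd k (DL θ f) y = ∑ i, ι3 (θ i) * pd k (pd i f) y := by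
    intro θ k y
    have hfun : DL θ f = fun z => ∑ i, Stmt10Aux.mulCLM (ι3 (θ i)) (pd i f z) := by
      funext z; simp [DL]
    rw [hfun, Stmt10Aux.pd_sum (fun i z => Stmt10Aux.mulCLM (ι3 (θ i)) (pd i f z))
      (fun i => (Stmt10Aux.mulCLM (ι3 (θ i))).differentiableAt.comp y (hdpd i y)) k]
    refine Finset.sum_congr rfl fun i _ => ?_
    rw [Stmt10Aux.pd_clm _ _ (hdpd i y)]
    simp
  -- E1
  have hA : DL φ (fun y => om φ ψ (f y)) = fun y => ∑ j, ι3 (φ j) * om φ ψ (pd j f y) := by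
    funext y
    simp only [DL]
    refine Finset.sum_congr rfl fun j _ => ?_
    have hrw : (fun z => om φ ψ (f z)) = fun z => Stmt10Aux.omCLM φ ψ (f z) := by
      funext z; simp
    rw [hrw, Stmt10Aux.pd_clm _ _ (hdf y)]
    simp
  have hE1 : DL ψ (DL φ (fun y => om φ ψ (f y))) x
      = ∑ i, ∑ j, ι3 (ψ i) * (ι3 (φ j) * om φ ψ (pd i (pd j f) x)) := by
    simp only [DL]
    rw [hA]
    have hrw : (fun y => ∑ j, ι3 (φ j) * om φ ψ (pd j f y))
        = fun y => ∑ j, ((Stmt10Aux.mulCLM (ι3 (φ j))).comp (Stmt10Aux.omCLM φ ψ)) (pd j f y) := by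
      funext z; simp
    rw [hrw]
    refine Finset.sum_congr rfl fun i _ => ?_
    rw [Stmt10Aux.pd_sum
      (fun j z => ((Stmt10Aux.mulCLM (ι3 (φ j))).comp (Stmt10Aux.omCLM φ ψ)) (pd j f z))
      (fun j => ((Stmt10Aux.mulCLM (ι3 (φ j))).comp
        (Stmt10Aux.omCLM φ ψ)).differentiableAt.comp x (hdpd j x)) i]
    rw [Finset.mul_sum]
    refine Finset.sum_congr rfl fun j _ => ?_
    rw [Stmt10Aux.pd_clm _ _ (hdpd j x)]
    simp [mul_assoc]
  -- E2
  have hE2 : om φ ψ (DL φ (DL ψ f) x)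
      = ∑ j, ∑ i, om φ ψ (ι3 (φ j) * (ι3 (ψ i) * pd j (pd i f) x)) := by
    have h1 : DL φ (DL ψ f) x = ∑ j, ∑ i, ι3 (φ j) * (ι3 (ψ i) * pd j (pd i f) x) := by
      simp only [DL]
      refine Finset.sum_congr rfl fun j _ => ?_
      rw [stepB ψ j x, Finset.mul_sum]
    rw [h1, Stmt10Aux.om_sum]
    exact Finset.sum_congr rfl fun j _ => Stmt10Aux.om_sum φ ψ _ _
  -- E3
  have hE3 : DL φ (fun y => om φ ψ (DL ψ f y)) x
      = ∑ j, ∑ i, ι3 (φ j) * om φ ψ (ι3 (ψ i) * pd j (pd i f) x) := by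
    rw [show DL φ (fun y => om φ ψ (DL ψ f y)) x
      = ∑ j, ι3 (φ j) * pd j (fun y => om φ ψ (DL ψ f y)) x from rfl]
    refine Finset.sum_congr rfl fun j _ => ?_
    have hrw : (fun y => om φ ψ (DL ψ f y)) = fun y => Stmt10Aux.omCLM φ ψ (DL ψ f y) := by
      funext z; simp
    rw [hrw, Stmt10Aux.pd_clm _ _ (hdDL ψ x), Stmt10Aux.omCLM_apply, stepB ψ j x,
      Stmt10Aux.om_sum, Finset.mul_sum]
  -- E4
  have hE4 : DL ψ (fun y => om φ ψ (DL φ f y)) x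
      = ∑ i, ∑ j, ι3 (ψ i) * om φ ψ (ι3 (φ j) * pd i (pd j f) x) := by
    rw [show DL ψ (fun y => om φ ψ (DL φ f y)) x
      = ∑ i, ι3 (ψ i) * pd i (fun y => om φ ψ (DL φ f y)) x from rfl]
    refine Finset.sum_congr rfl fun i _ => ?_
    have hrw : (fun y => om φ ψ (DL φ f y)) = fun y => Stmt10Aux.omCLM φ ψ (DL φ f y) := by
      funext z; simp
    rw [hrw, Stmt10Aux.pd_clm _ _ (hdDL φ x), Stmt10Aux.omCLM_apply, stepB φ i x,
      Stmt10Aux.om_sum, Finset.mul_sum]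
  rw [hE1, hE2, hE3, hE4, sub_eq_sub_iff_add_eq_add]
  have swap2 : ∀ F : Fin 3 → Fin 3 → Cl3, ∑ j, ∑ i, F j i = ∑ i, ∑ j, F j i :=
    fun F => Finset.sum_comm
  rw [swap2 (fun j i => ι3 (φ j) * om φ ψ (ι3 (ψ i) * pd j (pd i f) x)),
    swap2 (fun j i => om φ ψ (ι3 (φ j) * (ι3 (ψ i) * pd j (pd i f) x))),
    ← Finset.sum_add_distrib, ← Finset.sum_add_distrib]
  refine Finset.sum_congr rfl fun i _ => ?_
  rw [← Finset.sum_add_distrib, ← Finset.sum_add_distrib]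
  refine Finset.sum_congr rfl fun j _ => ?_
  rw [show pd j (pd i f) x = pd i (pd j f) x from Stmt10Aux.pd_symm hf x j i]
  exact Stmt10Aux.key φ ψ hφ i j (pd i (pd j f) x)
end
end

section
/- The ℝ_{0,3}-valued function g(x) = (1/2)x₁² + (1/2)x₂² + √2·x₁x₂ + (e₃e₁ − 1)x₃² satisfies φ∂ g ψ∂ = 0 on ℝ³ for the structural sets φ = {e₁, e₃, e₂} and ψ = {(√2/2)(e₁+e₃), (√2/2)(e₁−e₃), e₂}, yet its scalar part [g]₀ and its bivector part [g]₂ are not (φ,ψ)-inframonogenic: φ∂[g]₀ψ∂ = 2e₃e₁ ≠ 0 and φ∂[g]₂ψ∂ = −2e₃e₁ ≠ 0. -/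
noncomputable section

def pr (i : Fin 3) : V3 →L[ℝ] ℝ := ContinuousLinearMap.proj i

lemma hasF_coord (i : Fin 3) (x : V3) : HasFDerivAt (fun v : V3 => v i) (pr i) x :=
  (pr i).hasFDerivAt

lemma hasF_q (α β γ : ℝ) (x : V3) :
    HasFDerivAt (fun v : V3 => α*(v 0*v 0) + β*(v 1*v 1) + γ*(v 0*v 1))
      ((2*α*x 0 + γ*x 1) • pr 0 + (2*β*x 1 + γ*x 0) • pr 1) x := by
  have h0 := hasF_coord 0 x
  have h1 := hasF_coord 1 x
  have h := (((h0.mul h0).const_mul α).add ((h1.mul h1).const_mul β)).add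
    ((h0.mul h1).const_mul γ)
  refine HasFDerivAt.congr_fderiv h ?_
  ext w
  simp [pr, smul_eq_mul]
  ring

/-- Quadratic model function. -/
def Fq (α β γ : ℝ) (u v : Cl3) : V3 → Cl3 :=
  fun x => (α*(x 0*x 0) + β*(x 1*x 1) + γ*(x 0*x 1)) • u + (x 2*x 2) • v

lemma hasF_Fq (α β γ : ℝ) (u v : Cl3) (x : V3) :
    HasFDerivAt (Fq α β γ u v)
      ((((2*α*x 0 + γ*x 1) • pr 0 + (2*β*x 1 + γ*x 0) • pr 1).smulRight u)
        + (((2*x 2) • pr 2).smulRight v)) x := by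
  have h2 := hasF_coord 2 x
  have h := ((hasF_q α β γ x).smul_const u).add ((h2.mul h2).smul_const v)
  refine HasFDerivAt.congr_fderiv h ?_
  ext w
  simp [pr, smul_eq_mul]
  match_scalars <;> ring

lemma pd_Fq (α β γ : ℝ) (u v : Cl3) (j : Fin 3) (x : V3) :
    pd j (Fq α β γ u v) x
      = ((2*α*x 0 + γ*x 1) * (Pi.single j 1 : V3) 0
          + (2*β*x 1 + γ*x 0) * (Pi.single j 1 : V3) 1) • u
        + ((2*x 2) * (Pi.single j 1 : V3) 2) • v := by
  unfold pd
  rw [(hasF_Fq α β γ u v x).fderiv]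
  simp [pr, smul_eq_mul]

/-- Linear model function. -/
def Fl (p q r : ℝ) (u v : Cl3) : V3 → Cl3 :=
  fun x => (p*x 0 + q*x 1) • u + (r*x 2) • v

lemma hasF_Fl (p q r : ℝ) (u v : Cl3) (x : V3) :
    HasFDerivAt (Fl p q r u v)
      (((p • pr 0 + q • pr 1).smulRight u) + ((r • pr 2).smulRight v)) x := by
  have h0 := hasF_coord 0 x
  have h1 := hasF_coord 1 x
  have h2 := hasF_coord 2 x
  have h := (((h0.const_mul p).add (h1.const_mul q)).smul_const u).add
    ((h2.const_mul r).smul_const v)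
  exact h

lemma pd_Fl (p q r : ℝ) (u v : Cl3) (i : Fin 3) (x : V3) :
    pd i (Fl p q r u v) x
      = (p * (Pi.single i 1 : V3) 0 + q * (Pi.single i 1 : V3) 1) • u
        + (r * (Pi.single i 1 : V3) 2) • v := by
  unfold pd
  rw [(hasF_Fl p q r u v x).fderiv]
  simp [pr, smul_eq_mul]

lemma pd_pd_Fq (α β γ : ℝ) (u v : Cl3) (i j : Fin 3) (x : V3) :
    pd i (pd j (Fq α β γ u v)) x
      = ((2*α*(Pi.single i 1 : V3) 0 + γ*(Pi.single i 1 : V3) 1) * (Pi.single j 1 : V3) 0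
          + (γ*(Pi.single i 1 : V3) 0 + 2*β*(Pi.single i 1 : V3) 1) * (Pi.single j 1 : V3) 1) • u
        + ((2*(Pi.single i 1 : V3) 2) * (Pi.single j 1 : V3) 2) • v := by
  have hj : pd j (Fq α β γ u v)
      = Fl (2*α*(Pi.single j 1 : V3) 0 + γ*(Pi.single j 1 : V3) 1)
           (γ*(Pi.single j 1 : V3) 0 + 2*β*(Pi.single j 1 : V3) 1)
           (2*(Pi.single j 1 : V3) 2) u v := by
    funext y
    rw [pd_Fq]
    unfold Fl
    match_scalars <;> ring
  rw [hj, pd_Fl]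
  match_scalars <;> ring

lemma Q3_apply (v : V3) : Q3 v = -(v 0 ^ 2 + v 1 ^ 2 + v 2 ^ 2) := by
  simp [Q3, QuadraticMap.weightedSumSquares_apply, Fin.sum_univ_three, sq]

lemma ι3_mul_add_swap (m n : V3) : ι3 m * ι3 n + ι3 n * ι3 m
    = algebraMap ℝ Cl3 (QuadraticMap.polar Q3 m n) :=
  CliffordAlgebra.ι_mul_ι_add_swap m n

lemma polar3 (m n : V3) : QuadraticMap.polar Q3 m n
    = -2*(m 0 * n 0 + m 1 * n 1 + m 2 * n 2) := by
  simp [QuadraticMap.polar, Q3_apply]; ring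

lemma sqrt2_mul : Real.sqrt 2 * Real.sqrt 2 = 2 :=
  Real.mul_self_sqrt (by norm_num)

def ea : Cl3 := ι3 (Pi.single 0 1)
def eb : Cl3 := ι3 (Pi.single 1 1)
def ec : Cl3 := ι3 (Pi.single 2 1)

lemma ι3_sq (m : V3) : ι3 m * ι3 m = algebraMap ℝ Cl3 (Q3 m) :=
  CliffordAlgebra.ι_sq_scalar Q3 m

lemma sq_single (i : Fin 3) : ι3 (Pi.single i 1) * ι3 (Pi.single i 1) = -1 := by
  rw [ι3_sq, Q3_apply]
  fin_cases i <;> norm_num [Pi.single_apply, Fin.ext_iff]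

lemma sq_ea : ea * ea = -1 := sq_single 0
lemma sq_eb : eb * eb = -1 := sq_single 1
lemma sq_ec : ec * ec = -1 := sq_single 2

lemma anti_single {i j : Fin 3} (h : i ≠ j) :
    ι3 (Pi.single i 1) * ι3 (Pi.single j 1) = -(ι3 (Pi.single j 1) * ι3 (Pi.single i 1)) := by
  have := ι3_mul_add_swap (Pi.single i 1) (Pi.single j 1)
  rw [polar3] at this
  have hz : (-2*((Pi.single i 1 : V3) 0 * (Pi.single j 1 : V3) 0
      + (Pi.single i 1 : V3) 1 * (Pi.single j 1 : V3) 1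
      + (Pi.single i 1 : V3) 2 * (Pi.single j 1 : V3) 2)) = 0 := by
    fin_cases i <;> fin_cases j <;> simp_all [Pi.single_apply, Fin.ext_iff] <;> norm_num
  rw [hz, map_zero] at this
  exact eq_neg_of_add_eq_zero_left this

lemma anti_ac : ea * ec = -(ec * ea) := anti_single (by decide)
lemma anti_ba : eb * ea = -(ea * eb) := anti_single (by decide)
lemma anti_bc : eb * ec = -(ec * eb) := anti_single (by decide)

lemma key_triple : eb * (ec * ea) * eb = -(ec * ea) := by
  have h1 : eb * (ec * ea) * eb = (eb * ec) * (ea * eb) := by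
    rw [← mul_assoc, mul_assoc (eb * ec)]
  rw [h1, anti_bc, neg_mul, mul_assoc]
  have h2 : eb * (ea * eb) = ea := by
    rw [← mul_assoc, anti_ba, neg_mul, mul_assoc, sq_eb, mul_neg_one, neg_neg]
  rw [h2]



def φc : Fin 3 → V3 := ![Pi.single 0 1, Pi.single 2 1, Pi.single 1 1]
def ψc : Fin 3 → V3 := ![(Real.sqrt 2 / 2) • (Pi.single 0 1 + Pi.single 2 1),
                (Real.sqrt 2 / 2) • ((Pi.single 0 1 : V3) - Pi.single 2 1),
                Pi.single 1 1]

lemma ιψ0 : ι3 (ψc 0) = (Real.sqrt 2 / 2) • (ea + ec) := by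
  simp [ψc, ea, ec, map_smul, map_add]
lemma ιψ1 : ι3 (ψc 1) = (Real.sqrt 2 / 2) • (ea - ec) := by
  simp [ψc, ea, ec, map_smul, map_sub]
lemma ιψ2 : ι3 (ψc 2) = eb := rfl
lemma ιφ0 : ι3 (φc 0) = ea := rfl
lemma ιφ1 : ι3 (φc 1) = ec := rfl
lemma ιφ2 : ι3 (φc 2) = eb := rfl

lemma DLR_Fq (α β γ : ℝ) (u v : Cl3) (x : V3) :
    DLR φc ψc (Fq α β γ u v) x
      = (Real.sqrt 2 / 2) • ((2*α) • (ea * u * (ea + ec)) + γ • (ea * u * (ea - ec))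
          + γ • (ec * u * (ea + ec)) + (2*β) • (ec * u * (ea - ec)))
        + (2:ℝ) • (eb * v * eb) := by
  unfold DLR
  simp only [Fin.sum_univ_three, pd_pd_Fq, ιψ0, ιψ1, ιψ2, ιφ0, ιφ1, ιφ2]
  norm_num [Pi.single_apply, Fin.ext_iff]
  simp only [mul_add, mul_sub, smul_add, smul_sub, mul_smul_comm, smul_smul]
  module

lemma eval_g (x : V3) :
    DLR φc ψc (Fq (1/2) (1/2) (Real.sqrt 2) 1 (ec*ea - 1)) x = 0 := by
  rw [DLR_Fq]
  simp only [mul_one, one_mul, mul_zero, zero_mul, mul_add, mul_sub, sub_mul, add_mul,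
    smul_add, smul_sub, smul_smul, sq_ea, sq_eb, sq_ec, anti_ac, key_triple, smul_zero,
    smul_neg, mul_neg, neg_neg]
  match_scalars <;>
    first
      | ring1
      | linear_combination sqrt2_mul
      | linear_combination -sqrt2_mul
      | linear_combination sqrt2_mul/2
      | linear_combination -sqrt2_mul/2

lemma eval_g0 (x : V3) :
    DLR φc ψc (Fq (1/2) (1/2) (Real.sqrt 2) 1 (-1)) x = (2:ℝ) • (ec * ea) := by
  rw [DLR_Fq]
  simp only [mul_one, one_mul, mul_zero, zero_mul, mul_add, mul_sub, sub_mul, add_mul,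
    smul_add, smul_sub, smul_smul, sq_ea, sq_eb, sq_ec, anti_ac, key_triple, smul_zero,
    smul_neg, mul_neg, neg_neg, mul_neg_one, neg_mul]
  match_scalars <;>
    first
      | ring1
      | linear_combination sqrt2_mul
      | linear_combination -sqrt2_mul
      | linear_combination sqrt2_mul/2
      | linear_combination -sqrt2_mul/2

lemma eval_g2 (x : V3) :
    DLR φc ψc (Fq 0 0 0 0 (ec * ea)) x = (-2:ℝ) • (ec * ea) := by
  rw [DLR_Fq]
  simp only [mul_one, one_mul, mul_zero, zero_mul, mul_add, mul_sub, sub_mul, add_mul,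
    smul_add, smul_sub, smul_smul, sq_ea, sq_eb, sq_ec, anti_ac, key_triple, smul_zero,
    smul_neg, mul_neg, neg_neg, zero_smul]
  match_scalars <;> ring1

lemma structural_aux (ψ : Fin 3 → V3)
    (h : ∀ i j, -2*(ψ i 0 * ψ j 0 + ψ i 1 * ψ j 1 + ψ i 2 * ψ j 2)
        = if i = j then (-2:ℝ) else 0) :
    StructuralSet ψ := by
  intro i j
  rw [ι3_mul_add_swap, polar3, h]

lemma structural_φ : StructuralSet ![Pi.single 0 1, Pi.single 2 1, Pi.single 1 1] := by
  apply structural_aux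
  intro i j
  fin_cases i <;> fin_cases j <;> norm_num [Pi.single_apply, Fin.ext_iff]

lemma structural_ψ : StructuralSet ![(Real.sqrt 2 / 2) • (Pi.single 0 1 + Pi.single 2 1),
                (Real.sqrt 2 / 2) • ((Pi.single 0 1 : V3) - Pi.single 2 1),
                Pi.single 1 1] := by
  apply structural_aux
  intro i j
  have ht : Real.sqrt 2 * Real.sqrt 2 = 2 := sqrt2_mul
  fin_cases i <;> fin_cases j <;>
    norm_num [Pi.single_apply, Fin.ext_iff, Pi.smul_apply, Pi.add_apply, Pi.sub_apply,
      smul_eq_mul] <;>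
    first
      | ring1
      | linear_combination ht/2
      | linear_combination -ht/2
      | linear_combination ht
      | linear_combination -ht

lemma ca_sq : (ec * ea) * (ec * ea) = -1 := by
  have h1 : (ec*ea)*(ec*ea) = ec*(ea*ec)*ea := by noncomm_ring
  rw [h1, anti_ac, mul_neg, neg_mul]
  have h2 : ec*(ec*ea)*ea = (ec*ec)*(ea*ea) := by noncomm_ring
  rw [h2, sq_ea, sq_ec]
  noncomm_ring

lemma ca_ne_zero : ec * ea ≠ 0 := by
  intro h
  have := ca_sq
  rw [h, zero_mul] at this
  exact one_ne_zero (α := Cl3) (neg_eq_zero.mp this.symm)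

/-- the counterexample `g(x) = x₁²/2 + x₂²/2 + √2 x₁x₂ + (e₃e₁ - 1)x₃²` is
`(φ,ψ)`-inframonogenic for `φ = {e₁,e₃,e₂}`, `ψ = {√2/2(e₁+e₃), √2/2(e₁-e₃), e₂}`, but its
scalar part and bivector part are not: `φ∂[g]₀ψ∂ = 2e₃e₁ ≠ 0`, `φ∂[g]₂ψ∂ = -2e₃e₁ ≠ 0`. -/
theorem stmt19
    (e : Fin 3 → Cl3) (he : e = fun i => ι3 (Pi.single i 1))
    (φ ψ : Fin 3 → V3)
    (hφ : φ = ![Pi.single 0 1, Pi.single 2 1, Pi.single 1 1])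
    (hψ : ψ = ![(Real.sqrt 2 / 2) • (Pi.single 0 1 + Pi.single 2 1),
                (Real.sqrt 2 / 2) • ((Pi.single 0 1 : V3) - Pi.single 2 1),
                Pi.single 1 1])
    (g g0 g2 : V3 → Cl3)
    (hg : g = fun x => algebraMap ℝ Cl3 ((1/2) * x 0 ^ 2 + (1/2) * x 1 ^ 2
            + Real.sqrt 2 * (x 0 * x 1)) + (x 2 ^ 2) • (e 2 * e 0 - 1))
    (hg0 : g0 = fun x => algebraMap ℝ Cl3 ((1/2) * x 0 ^ 2 + (1/2) * x 1 ^ 2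
            + Real.sqrt 2 * (x 0 * x 1) - x 2 ^ 2))
    (hg2 : g2 = fun x => (x 2 ^ 2) • (e 2 * e 0)) :
    StructuralSet φ ∧ StructuralSet ψ ∧
    (∀ x, DLR φ ψ g x = 0) ∧
    (∀ x, DLR φ ψ g0 x = (2 : ℝ) • (e 2 * e 0)) ∧ (2 : ℝ) • (e 2 * e 0) ≠ 0 ∧
    (∀ x, DLR φ ψ g2 x = (-2 : ℝ) • (e 2 * e 0)) ∧ (-2 : ℝ) • (e 2 * e 0) ≠ 0 := by 
  subst he hφ hψ hg hg0 hg2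
  have hgF : (fun x : V3 => algebraMap ℝ Cl3 ((1/2) * x 0 ^ 2 + (1/2) * x 1 ^ 2
        + Real.sqrt 2 * (x 0 * x 1))
        + (x 2 ^ 2) • ((fun i => ι3 (Pi.single i 1)) 2 * (fun i => ι3 (Pi.single i 1)) 0 - 1))
      = Fq (1/2) (1/2) (Real.sqrt 2) 1 (ec * ea - 1) := by
    funext x
    rw [Algebra.algebraMap_eq_smul_one,
      show (fun i => ι3 (Pi.single i 1)) 2 * (fun i => ι3 (Pi.single i 1)) 0 = ec * ea from rfl]
    show _ = _ • (1:Cl3) + _ • (ec * ea - 1)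
    match_scalars <;> ring1
  have hg0F : (fun x : V3 => algebraMap ℝ Cl3 ((1/2) * x 0 ^ 2 + (1/2) * x 1 ^ 2
        + Real.sqrt 2 * (x 0 * x 1) - x 2 ^ 2))
      = Fq (1/2) (1/2) (Real.sqrt 2) 1 (-1) := by
    funext x
    rw [Algebra.algebraMap_eq_smul_one]
    show _ = _ • (1:Cl3) + _ • (-1 : Cl3)
    match_scalars <;> ring1
  have hg2F : (fun x : V3 => (x 2 ^ 2)
        • ((fun i => ι3 (Pi.single i 1)) 2 * (fun i => ι3 (Pi.single i 1)) 0))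
      = Fq 0 0 0 0 (ec * ea) := by
    funext x
    show (x 2 ^ 2) • (ec * ea) = _ • (0:Cl3) + (x 2 * x 2) • (ec * ea)
    rw [smul_zero, zero_add, sq]
  have hee : (fun i => ι3 (Pi.single i 1)) 2 * (fun i => ι3 (Pi.single i 1)) 0 = ec * ea := rfl
  refine ⟨structural_φ, structural_ψ, ?_, ?_, ?_, ?_, ?_⟩
  · intro x
    rw [hgF]
    exact eval_g x
  · intro x
    rw [hg0F, hee]
    exact eval_g0 x
  · rw [hee]
    exact smul_ne_zero two_ne_zero ca_ne_zero
  · intro x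
    rw [hg2F, hee]
    exact eval_g2 x
  · rw [hee]
    exact smul_ne_zero (by norm_num) ca_ne_zero
end
end
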